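/- arXiv:2410.23100 — 3 statements merged into one kernel-verified Lean document; each statement's English description precedes it below -/
import Mathlib

section
/- Let D ⊆ ℝ^d be a bounded Lipschitz domain containing the origin such that x · n(x) ≥ a > 0 for all boundary points x at which the outer unit normal n(x) exists. Then D is star-shaped with respect to the closed ball of radius a centered at the origin, i.e., for every z with |z| ≤ a and every x ∈ D, the segment [z, x] is contained in the closure of D. -/
open RealInnerProductSpace

/-- `ν` is an outer unit normal to `D` at the boundary point `x`, in the
first-order sense: `⟪y - x, ν⟫ ≤ o(‖y - x‖)` for `y ∈ closure D` near `x`. -/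
def HasOuterNormalAt (d : ℕ) (D : Set (EuclideanSpace ℝ (Fin d)))
    (x ν : EuclideanSpace ℝ (Fin d)) : Prop :=
  x ∈ frontier D ∧ ‖ν‖ = 1 ∧
    ∀ ε > (0 : ℝ), ∃ δ > (0 : ℝ), ∀ y ∈ closure D, ‖y - x‖ < δ →
      ⟪y - x, ν⟫ ≤ ε * ‖y - x‖

theorem aux_strict
    (d : ℕ) (D : Set (EuclideanSpace ℝ (Fin d))) (a : ℝ)
    (hopen : IsOpen D)
    (ha : 0 < a)
    (hnormal : ∀ x ∈ frontier D, ∃ ν, HasOuterNormalAt d D x ν)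
    (hcond : ∀ x ν, HasOuterNormalAt d D x ν → a ≤ ⟪x, ν⟫) :
    ∀ z : EuclideanSpace ℝ (Fin d), ‖z‖ < a →
      ∀ x ∈ D, segment ℝ z x ⊆ closure D := by
  intro z hz x hx
  rcases eq_or_ne z x with rfl | hzx
  · rw [segment_same]
    exact Set.singleton_subset_iff.2 (subset_closure hx)
  have hzx' : (0:ℝ) < ‖z - x‖ := by
    rw [norm_pos_iff]; exact sub_ne_zero_of_ne hzx
  intro w hw
  rw [segment_symm, segment_eq_image'] at hw
  obtain ⟨t, ht, rfl⟩ := hw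
  set p : ℝ → EuclideanSpace ℝ (Fin d) := fun s => x + s • (z - x) with hp
  have hpcont : Continuous p := by
    apply continuous_const.add
    exact continuous_id.smul continuous_const
  have hp0 : p 0 = x := by simp [hp]
  set S : Set ℝ := {s | s ∈ Set.Icc (0:ℝ) 1 ∧ ∀ u ∈ Set.Icc (0:ℝ) s, p u ∈ closure D} with hS
  have h0S : (0:ℝ) ∈ S := by
    refine ⟨⟨le_refl 0, zero_le_one⟩, fun u hu => ?_⟩
    have : u = 0 := le_antisymm hu.2 hu.1
    rw [this, hp0]; exact subset_closure hx
  have hbdd : BddAbove S := ⟨1, fun s hs => hs.1.2⟩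
  set T := sSup S with hT
  have hT0 : 0 ≤ T := le_csSup hbdd h0S
  have hT1 : T ≤ 1 := csSup_le ⟨0, h0S⟩ (fun s hs => hs.1.2)
  have hclos : ∀ s, 0 ≤ s → s < T → p s ∈ closure D := by
    intro s hs hsT
    obtain ⟨u, huS, hsu⟩ := exists_lt_of_lt_csSup ⟨0, h0S⟩ hsT
    exact huS.2 s ⟨hs, hsu.le⟩
  have hTmem : p T ∈ closure D := by
    rcases eq_or_lt_of_le hT0 with h | h
    · rw [← h, hp0]; exact subset_closure hx
    · have h1 : p T ∈ p '' closure (Set.Ico 0 T) :=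
        ⟨T, by rw [closure_Ico h.ne]; exact ⟨hT0, le_refl T⟩, rfl⟩
      have h2 : p '' closure (Set.Ico 0 T) ⊆ closure (p '' Set.Ico 0 T) :=
        image_closure_subset_closure_image hpcont
      have h3 : p '' Set.Ico 0 T ⊆ closure D := by
        rintro _ ⟨u, hu, rfl⟩; exact hclos u hu.1 hu.2
      have := h2 h1
      have := closure_mono h3 this
      rwa [closure_closure] at this
  have hTS : T ∈ S := by
    refine ⟨⟨hT0, hT1⟩, fun u hu => ?_⟩
    rcases eq_or_lt_of_le hu.2 with h | h
    · rw [h]; exact hTmem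
    · exact hclos u hu.1 h
  -- if t ≤ T we are done
  rcases le_or_gt t T with hle | hlt
  · exact hTS.2 t ⟨ht.1, hle⟩
  exfalso
  have hTlt1 : T < 1 := lt_of_lt_of_le hlt ht.2
  -- T > 0
  have hT0' : 0 < T := by
    have hnb : p ⁻¹' D ∈ nhds (0:ℝ) := by
      apply hpcont.continuousAt.preimage_mem_nhds
      rw [hp0]; exact hopen.mem_nhds hx
    obtain ⟨δ, hδ, hball⟩ := Metric.mem_nhds_iff.1 hnb
    have ht0S : min 1 (δ/2) ∈ S := by
      constructor
      · exact ⟨le_min zero_le_one (by linarith), min_le_left _ _⟩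
      · intro u hu
        apply subset_closure
        apply hball
        rw [Metric.mem_ball, Real.dist_eq, sub_zero, abs_of_nonneg hu.1]
        have := hu.2
        have h2 : u ≤ δ/2 := le_trans this (min_le_right _ _)
        linarith
    have := le_csSup hbdd ht0S
    have hm : 0 < min 1 (δ/2) := lt_min one_pos (by linarith)
    linarith
  -- p T ∉ D
  have hynotD : p T ∉ D := by
    intro hyD
    have hnb : p ⁻¹' D ∈ nhds T :=
      hpcont.continuousAt.preimage_mem_nhds (hopen.mem_nhds hyD)
    obtain ⟨δ, hδ, hball⟩ := Metric.mem_nhds_iff.1 hnb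
    set T' := min 1 (T + δ/2) with hT'
    have hT'S : T' ∈ S := by
      constructor
      · exact ⟨le_min zero_le_one (by linarith), min_le_left _ _⟩
      · intro u hu
        rcases le_or_gt u T with h | h
        · exact hTS.2 u ⟨hu.1, h⟩
        · apply subset_closure
          apply hball
          rw [Metric.mem_ball, Real.dist_eq, abs_of_nonneg (by linarith : (0:ℝ) ≤ u - T)]
          have : u ≤ T + δ/2 := le_trans hu.2 (min_le_right _ _)
          linarith
    have h1 : T' ≤ T := le_csSup hbdd hT'S
    have h2 : T < T' := lt_min hTlt1 (by linarith)
    linarith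
  have hyfr : p T ∈ frontier D := by
    rw [frontier_eq_closure_inter_closure, hopen.isClosed_compl.closure_eq]
    exact ⟨hTmem, hynotD⟩
  obtain ⟨ν, hν⟩ := hnormal _ hyfr
  have hacond : a ≤ ⟪p T, ν⟫ := hcond _ _ hν
  obtain ⟨-, hν1, hνo⟩ := hν
  -- key inequality : 0 ≤ ⟪z - x, ν⟫
  have hkey : 0 ≤ ⟪z - x, ν⟫ := by
    have h1 : ∀ ε > (0:ℝ), -⟪z - x, ν⟫ ≤ ε * ‖z - x‖ := by
      intro ε hε
      obtain ⟨δ, hδ, hδ'⟩ := hνo ε hε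
      set m := min T (δ / (2 * ‖z - x‖)) with hm
      have hm0 : 0 < m := lt_min hT0' (by positivity)
      have hs0 : 0 ≤ T - m := by
        have := min_le_left T (δ / (2 * ‖z - x‖)); linarith
      have hsT : T - m < T := by linarith
      have hmem := hclos (T - m) hs0 hsT
      have hdiff : p (T - m) - p T = (-m) • (z - x) := by
        simp only [hp]; module
      have hnorm : ‖(-m) • (z - x)‖ = m * ‖z - x‖ := by
        rw [norm_smul, Real.norm_eq_abs, abs_neg, abs_of_pos hm0]
      have hlt : ‖p (T - m) - p T‖ < δ := by
        rw [hdiff, hnorm]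
        have : m ≤ δ / (2 * ‖z - x‖) := min_le_right _ _
        have h2 : m * ‖z - x‖ ≤ (δ / (2 * ‖z - x‖)) * ‖z - x‖ :=
          mul_le_mul_of_nonneg_right this (le_of_lt hzx')
        have h3 : (δ / (2 * ‖z - x‖)) * ‖z - x‖ = δ / 2 := by
          field_simp
        linarith
      have := hδ' (p (T - m)) hmem hlt
      rw [hdiff] at this
      rw [hnorm, real_inner_smul_left] at this
      -- -m * ⟪z-x,ν⟫ ≤ ε * (m * ‖z-x‖)
      nlinarith [hm0]
    by_contra hc
    push_neg at hc
    have hε : 0 < -⟪z - x, ν⟫ / (2 * ‖z - x‖) :=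
      div_pos (by linarith) (by positivity)
    have := h1 _ hε
    have h4 : -⟪z - x, ν⟫ / (2 * ‖z - x‖) * ‖z - x‖ = -⟪z - x, ν⟫ / 2 := by
      field_simp
    rw [h4] at this
    linarith
  -- contradiction
  have h2 : ⟪z, ν⟫ < a := by
    have := real_inner_le_norm z ν
    rw [hν1, mul_one] at this
    linarith
  have h3 : ⟪z - p T, ν⟫ < 0 := by
    rw [inner_sub_left]; linarith
  have h4 : z - p T = (1 - T) • (z - x) := by
    simp only [hp]; module
  rw [h4, real_inner_smul_left] at h3
  nlinarith

/-- a bounded domain containing the origin whose boundary points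
(where the outer unit normal exists) satisfy `x · n(x) ≥ a > 0` is star-shaped
with respect to the closed ball of radius `a` centered at the origin. -/
theorem starShaped_wrt_ball_of_normal_condition
    (d : ℕ) (D : Set (EuclideanSpace ℝ (Fin d))) (a : ℝ)
    (hopen : IsOpen D) (hbd : Bornology.IsBounded D)
    (h0 : (0 : EuclideanSpace ℝ (Fin d)) ∈ D) (ha : 0 < a)
    (hnormal : ∀ x ∈ frontier D, ∃ ν, HasOuterNormalAt d D x ν)
    (hcond : ∀ x ν, HasOuterNormalAt d D x ν → a ≤ ⟪x, ν⟫) :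
    ∀ z : EuclideanSpace ℝ (Fin d), ‖z‖ ≤ a →
      ∀ x ∈ D, segment ℝ z x ⊆ closure D := by
  have haux := aux_strict d D a hopen ha hnormal hcond
  intro z hz x hx w hw
  rw [segment_symm, segment_eq_image'] at hw
  obtain ⟨t, ht, rfl⟩ := hw
  set c : ℕ → ℝ := fun n => 1 - 1 / (n + 1) with hc
  have hc01 : ∀ n, 0 ≤ c n ∧ c n < 1 := by
    intro n
    have h1 : (0:ℝ) < 1 / (n + 1) := by positivity
    have h2 : 1 / ((n:ℝ) + 1) ≤ 1 := by
      rw [div_le_one (by positivity)]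
      linarith [Nat.cast_nonneg (α := ℝ) n]
    constructor <;> simp only [hc] <;> linarith
  have hmem : ∀ n, x + t • (c n • z - x) ∈ closure D := by
    intro n
    have hzn : ‖c n • z‖ < a := by
      rw [norm_smul, Real.norm_eq_abs, abs_of_nonneg (hc01 n).1]
      nlinarith [(hc01 n).1, (hc01 n).2, norm_nonneg z]
    have := haux (c n • z) hzn x hx
    rw [segment_symm, segment_eq_image'] at this
    exact this ⟨t, ht, rfl⟩
  have hctend : Filter.Tendsto c Filter.atTop (nhds 1) := by
    have : Filter.Tendsto (fun n : ℕ => 1 / ((n:ℝ) + 1)) Filter.atTop (nhds 0) :=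
      tendsto_one_div_add_atTop_nhds_zero_nat
    have := (tendsto_const_nhds (x := (1:ℝ))).sub this
    simpa [hc, one_div] using this
  have htend : Filter.Tendsto (fun n => x + t • (c n • z - x)) Filter.atTop
      (nhds (x + t • ((1:ℝ) • z - x))) := by
    apply Filter.Tendsto.const_add
    apply Filter.Tendsto.const_smul
    exact (hctend.smul_const z).sub_const x
  rw [one_smul] at htend
  exact isClosed_closure.mem_of_tendsto htend (Filter.Eventually.of_forall hmem)
end

section
/- Under the hypotheses of the previous statement (Φ nonnegative, bounded by M, and L-Lipschitz in δ uniformly in r, for |δ|,|δ'| ≤ γ), the Hellinger distance between the posteriors satisfies d_Hell(μ^δ, μ^{δ'}) ≤ C L e^{(3/2)M} |δ − δ'| for an absolute constant C > 0 independent of M, L, γ. -/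
open MeasureTheory

private lemma exp_neg_lip {u v : ℝ} (hu : 0 ≤ u) (hv : 0 ≤ v) :
    |Real.exp (-u) - Real.exp (-v)| ≤ |u - v| := by
  wlog h : v ≤ u generalizing u v
  · rw [abs_sub_comm, abs_sub_comm u v]; exact this hv hu (le_of_not_ge h)
  have h1 : Real.exp (-u) ≤ Real.exp (-v) := Real.exp_le_exp.2 (by linarith)
  rw [abs_of_nonpos (by linarith), abs_of_nonneg (by linarith)]
  have h2 : (-(u - v)) + 1 ≤ Real.exp (-(u - v)) := Real.add_one_le_exp _
  have h3 : Real.exp (-u) = Real.exp (-v) * Real.exp (-(u - v)) := by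
    rw [← Real.exp_add]; ring_nf
  have h4 : Real.exp (-v) ≤ 1 := Real.exp_le_one_iff.2 (by linarith)
  have h5 : (0 : ℝ) < Real.exp (-v) := Real.exp_pos _
  nlinarith

set_option maxHeartbeats 1600000 in
/-- Hellinger stability of the posterior in the data:
`d_Hell(μ^δ, μ^{δ'}) ≤ C L e^{(3/2)M} |δ − δ'|` for an absolute constant `C`
independent of `M`, `L`, `γ`, where `μ^δ` has density `e^{−Φ(·,δ)}/Z(δ)` with
respect to the prior `μ₀`. -/
theorem hellinger_stability
    {X : Type*} [MeasurableSpace X] (μ₀ : Measure X) [IsProbabilityMeasure μ₀]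
    (K : ℕ) :
    ∃ C : ℝ, 0 < C ∧
      ∀ (Φ : X → EuclideanSpace ℝ (Fin K) → ℝ) (M L γ : ℝ),
        (∀ δ, Measurable fun r => Φ r δ) →
        (∀ r δ, 0 ≤ Φ r δ) →
        (∀ r δ, ‖δ‖ ≤ γ → Φ r δ ≤ M) →
        (∀ r δ δ', ‖δ‖ ≤ γ → ‖δ'‖ ≤ γ → |Φ r δ - Φ r δ'| ≤ L * ‖δ - δ'‖) →
        ∀ δ δ', ‖δ‖ ≤ γ → ‖δ'‖ ≤ γ →
          Real.sqrt ((1 / 2) * ∫ r,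
              (Real.sqrt (Real.exp (-Φ r δ) / ∫ s, Real.exp (-Φ s δ) ∂μ₀) -
                Real.sqrt (Real.exp (-Φ r δ') / ∫ s, Real.exp (-Φ s δ') ∂μ₀)) ^ 2 ∂μ₀)
            ≤ C * L * Real.exp ((3 / 2) * M) * ‖δ - δ'‖ := by
  refine ⟨1, one_pos, ?_⟩
  intro Φ M L γ hmeas hpos hbd hlip δ δ' hδ hδ'
  by_cases hdd : δ = δ'
  · subst hdd
    simp
  -- nontrivial case
  have hX : Nonempty X := by
    by_contra h
    rw [not_nonempty_iff] at h
    have h1 := measure_univ (μ := μ₀)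
    rw [Set.univ_eq_empty_iff.mpr h, measure_empty] at h1
    exact zero_ne_one h1
  obtain ⟨r0⟩ := hX
  have hM0 : 0 ≤ M := le_trans (hpos r0 δ) (hbd r0 δ hδ)
  have hd : 0 < ‖δ - δ'‖ := norm_pos_iff.mpr (sub_ne_zero_of_ne hdd)
  have hL0 : 0 ≤ L := by
    have h1 := hlip r0 δ δ' hδ hδ'
    nlinarith [abs_nonneg (Φ r0 δ - Φ r0 δ')]
  set d := ‖δ - δ'‖ with hdef
  clear_value d
  -- integrability of the densities
  have hint : ∀ δ0, Integrable (fun s => Real.exp (-Φ s δ0)) μ₀ := by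
    intro δ0
    refine (integrable_const (1 : ℝ)).mono' ((hmeas δ0).neg.exp).aestronglyMeasurable ?_
    filter_upwards with s
    rw [Real.norm_eq_abs, abs_of_pos (Real.exp_pos _)]
    exact Real.exp_le_one_iff.2 (neg_nonpos.2 (hpos s δ0))
  -- bounds on the normalizing constants
  have hZlow : ∀ δ0, ‖δ0‖ ≤ γ → Real.exp (-M) ≤ ∫ s, Real.exp (-Φ s δ0) ∂μ₀ := by
    intro δ0 h0
    calc Real.exp (-M) = ∫ _s, Real.exp (-M) ∂μ₀ := by simp
      _ ≤ ∫ s, Real.exp (-Φ s δ0) ∂μ₀ :=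
          integral_mono (integrable_const _) (hint δ0)
            (fun s => Real.exp_le_exp.2 (by linarith [hbd s δ0 h0]))
  have hZhigh : ∀ δ0, (∫ s, Real.exp (-Φ s δ0) ∂μ₀) ≤ 1 := by
    intro δ0
    calc (∫ s, Real.exp (-Φ s δ0) ∂μ₀) ≤ ∫ _s, (1 : ℝ) ∂μ₀ :=
          integral_mono (hint δ0) (integrable_const _)
            (fun s => Real.exp_le_one_iff.2 (neg_nonpos.2 (hpos s δ0)))
      _ = 1 := by simp
  set Z := ∫ s, Real.exp (-Φ s δ) ∂μ₀ with hZdef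
  set Z' := ∫ s, Real.exp (-Φ s δ') ∂μ₀ with hZ'def
  have hZ1 : Real.exp (-M) ≤ Z := hZlow δ hδ
  have hZ1' : Real.exp (-M) ≤ Z' := hZlow δ' hδ'
  have hZpos : 0 < Z := lt_of_lt_of_le (Real.exp_pos _) hZ1
  have hZ'pos : 0 < Z' := lt_of_lt_of_le (Real.exp_pos _) hZ1'
  have hZ2 : Z ≤ 1 := hZhigh δ
  have hZ2' : Z' ≤ 1 := hZhigh δ'
  -- |Z - Z'| ≤ L d
  clear_value Z Z'
  have hZZ : |Z - Z'| ≤ L * d := by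
    have hsub : Z - Z' = ∫ s, (Real.exp (-Φ s δ) - Real.exp (-Φ s δ')) ∂μ₀ := by
      rw [hZdef, hZ'def]; exact (integral_sub (hint δ) (hint δ')).symm
    rw [hsub]
    have h1 : |∫ s, (Real.exp (-Φ s δ) - Real.exp (-Φ s δ')) ∂μ₀|
        ≤ ∫ s, |Real.exp (-Φ s δ) - Real.exp (-Φ s δ')| ∂μ₀ := by
      simpa [Real.norm_eq_abs] using
        norm_integral_le_integral_norm (fun s => Real.exp (-Φ s δ) - Real.exp (-Φ s δ')) (μ := μ₀)
    refine h1.trans ?_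
    calc (∫ s, |Real.exp (-Φ s δ) - Real.exp (-Φ s δ')| ∂μ₀) ≤ ∫ _s, L * d ∂μ₀ :=
          integral_mono ((hint δ).sub (hint δ')).abs (integrable_const _)
            (fun s => (exp_neg_lip (hpos s δ) (hpos s δ')).trans
              (hdef ▸ hlip s δ δ' hδ hδ'))
      _ = L * d := by simp
  -- square roots of the normalizing constants
  set sZ := Real.sqrt Z with hsZdef
  set sZ' := Real.sqrt Z' with hsZ'def
  have hsZ0 : 0 < sZ := by rw [hsZdef]; exact Real.sqrt_pos.2 hZpos
  have hsZ'0 : 0 < sZ' := by rw [hsZ'def]; exact Real.sqrt_pos.2 hZ'pos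
  have hem : (0 : ℝ) < Real.exp (-(M / 2)) := Real.exp_pos _
  have hemsq : Real.exp (-(M / 2)) ^ 2 = Real.exp (-M) := by
    rw [sq, ← Real.exp_add]; ring_nf
  have hsZlow : Real.exp (-(M / 2)) ≤ sZ := by
    rw [hsZdef]
    exact (Real.le_sqrt hem.le hZpos.le).2 (by rw [hemsq]; exact hZ1)
  have hsZ'low : Real.exp (-(M / 2)) ≤ sZ' := by
    rw [hsZ'def]
    exact (Real.le_sqrt hem.le hZ'pos.le).2 (by rw [hemsq]; exact hZ1')
  clear_value sZ sZ'
  have hME : Real.exp (M / 2) * Real.exp (-(M / 2)) = 1 := by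
    rw [← Real.exp_add, show M / 2 + -(M / 2) = 0 by ring, Real.exp_zero]
  have hE : Real.exp (M / 2) * Real.exp M * Real.exp (-(M / 2)) * Real.exp (-(M / 2))
      = Real.exp (M / 2) := by
    rw [← Real.exp_add, ← Real.exp_add, ← Real.exp_add,
      show M / 2 + M + -(M / 2) + -(M / 2) = M / 2 by ring]
  have hexp_mul : Real.exp (M / 2) * Real.exp M = Real.exp ((3 / 2) * M) := by
    rw [← Real.exp_add]; ring_nf
  have hexp_le : Real.exp (M / 2) ≤ Real.exp ((3 / 2) * M) :=
    Real.exp_le_exp.2 (by linarith)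
  have hexp2pos : (0 : ℝ) < Real.exp (M / 2) := Real.exp_pos _
  have hexpMpos : (0 : ℝ) < Real.exp M := Real.exp_pos _
  -- |√Z' - √Z| bound
  have hsdiff : |sZ' - sZ| ≤ (L * d / 2) * Real.exp (M / 2) := by
    have hmul : (sZ' - sZ) * (sZ' + sZ) = Z' - Z := by
      have h1 : sZ ^ 2 = Z := by rw [hsZdef]; exact Real.sq_sqrt hZpos.le
      have h2 : sZ' ^ 2 = Z' := by rw [hsZ'def]; exact Real.sq_sqrt hZ'pos.le
      nlinarith
    have habs : |sZ' - sZ| * (sZ' + sZ) = |Z' - Z| := by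
      rw [← hmul, abs_mul, abs_of_pos (add_pos hsZ'0 hsZ0)]
    have hZZ' : |Z' - Z| ≤ L * d := by rwa [abs_sub_comm] at hZZ
    have ha2 : |sZ' - sZ| * (2 * Real.exp (-(M / 2))) ≤ L * d := by
      have h8 := mul_le_mul_of_nonneg_left
        (add_le_add hsZ'low hsZlow) (abs_nonneg (sZ' - sZ))
      linarith
    have h9 := mul_le_mul_of_nonneg_right ha2 hexp2pos.le
    have hrw : |sZ' - sZ| * (2 * Real.exp (-(M / 2))) * Real.exp (M / 2)
        = 2 * |sZ' - sZ| := by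
      rw [show |sZ' - sZ| * (2 * Real.exp (-(M / 2))) * Real.exp (M / 2)
        = 2 * |sZ' - sZ| * (Real.exp (M / 2) * Real.exp (-(M / 2))) by ring, hME, mul_one]
    linarith
  -- pointwise bound B
  set B := L * d * Real.exp ((3 / 2) * M) with hBdef
  clear_value B
  have hB0 : 0 ≤ B := by rw [hBdef]; positivity
  have hsqrt_exp : ∀ x : ℝ, Real.sqrt (Real.exp x) = Real.exp (x / 2) := by
    intro x
    have h1 : Real.exp (x / 2) ^ 2 = Real.exp x := by rw [sq, ← Real.exp_add]; ring_nf
    rw [← h1, Real.sqrt_sq (Real.exp_pos _).le]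
  have hpt : ∀ r, (Real.sqrt (Real.exp (-Φ r δ) / Z) -
      Real.sqrt (Real.exp (-Φ r δ') / Z')) ^ 2 ≤ B ^ 2 := by
    intro r
    have hu0 : 0 ≤ Φ r δ := hpos r δ
    have hv0 : 0 ≤ Φ r δ' := hpos r δ'
    have huv : |Φ r δ - Φ r δ'| ≤ L * d := by rw [hdef]; exact hlip r δ δ' hδ hδ'
    set u := Φ r δ with hu
    set v := Φ r δ' with hv
    clear_value u v
    have e_u : Real.sqrt (Real.exp (-u) / Z) = Real.exp (-(u / 2)) / sZ := by
      rw [Real.sqrt_div (Real.exp_pos _).le, hsqrt_exp, hsZdef]; ring_nf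
    have e_v : Real.sqrt (Real.exp (-v) / Z') = Real.exp (-(v / 2)) / sZ' := by
      rw [Real.sqrt_div (Real.exp_pos _).le, hsqrt_exp, hsZ'def]; ring_nf
    rw [e_u, e_v]
    have key : |Real.exp (-(u / 2)) / sZ - Real.exp (-(v / 2)) / sZ'| ≤ B := by
      have decomp : Real.exp (-(u / 2)) / sZ - Real.exp (-(v / 2)) / sZ' =
          (Real.exp (-(u / 2)) - Real.exp (-(v / 2))) / sZ +
            Real.exp (-(v / 2)) * (1 / sZ - 1 / sZ') := by
        field_simp
        ring
      rw [decomp]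
      have hcA : (L * d / 2) * Real.exp (M / 2) * Real.exp (-(M / 2)) = L * d / 2 := by
        rw [mul_assoc, show Real.exp (M / 2) * Real.exp (-(M / 2)) = 1 from hME, mul_one]
      have h1 : |Real.exp (-(u / 2)) - Real.exp (-(v / 2))| ≤ L * d / 2 := by
        have h2 := exp_neg_lip (by linarith : (0:ℝ) ≤ u / 2)
          (by linarith : (0:ℝ) ≤ v / 2)
        calc |Real.exp (-(u / 2)) - Real.exp (-(v / 2))| ≤ |u / 2 - v / 2| := h2
          _ = |u - v| / 2 := by
              rw [show u / 2 - v / 2 = (u - v) / 2 by ring, abs_div]; norm_num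
          _ ≤ L * d / 2 := by linarith
      have hA : |(Real.exp (-(u / 2)) - Real.exp (-(v / 2))) / sZ|
          ≤ (L * d / 2) * Real.exp (M / 2) := by
        rw [abs_div, abs_of_pos hsZ0, div_le_iff₀ hsZ0]
        have h5 := mul_le_mul_of_nonneg_left hsZlow
          (by positivity : (0:ℝ) ≤ (L * d / 2) * Real.exp (M / 2))
        linarith
      have hB2 : |Real.exp (-(v / 2)) * (1 / sZ - 1 / sZ')|
          ≤ (L * d / 2) * Real.exp (M / 2) * Real.exp M := by
        have hev1 : Real.exp (-(v / 2)) ≤ 1 :=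
          Real.exp_le_one_iff.2 (by linarith)
        have hid : 1 / sZ - 1 / sZ' = (sZ' - sZ) / (sZ * sZ') := by
          field_simp
        have h6 : |sZ' - sZ| / (sZ * sZ') ≤ (L * d / 2) * Real.exp (M / 2) * Real.exp M := by
          rw [div_le_iff₀ (mul_pos hsZ0 hsZ'0)]
          have hprod : Real.exp (-(M / 2)) * Real.exp (-(M / 2)) ≤ sZ * sZ' :=
            mul_le_mul hsZlow hsZ'low hem.le hsZ0.le
          have h7 := mul_le_mul_of_nonneg_left hprod
            (by positivity : (0:ℝ) ≤ (L * d / 2) * Real.exp (M / 2) * Real.exp M)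
          have hcoef : (L * d / 2) * Real.exp (M / 2) * Real.exp M *
              (Real.exp (-(M / 2)) * Real.exp (-(M / 2))) = (L * d / 2) * Real.exp (M / 2) := by
            rw [show (L * d / 2) * Real.exp (M / 2) * Real.exp M *
                (Real.exp (-(M / 2)) * Real.exp (-(M / 2))) =
                (L * d / 2) * (Real.exp (M / 2) * Real.exp M *
                Real.exp (-(M / 2)) * Real.exp (-(M / 2))) by ring, hE]
          linarith [hsdiff]
        rw [abs_mul, hid, abs_of_pos (Real.exp_pos _)]
        calc Real.exp (-(v / 2)) * |(sZ' - sZ) / (sZ * sZ')|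
            ≤ 1 * ((L * d / 2) * Real.exp (M / 2) * Real.exp M) := by
              refine mul_le_mul hev1 ?_ (abs_nonneg _) one_pos.le
              rw [abs_div, abs_of_pos (mul_pos hsZ0 hsZ'0)]
              exact h6
          _ = (L * d / 2) * Real.exp (M / 2) * Real.exp M := one_mul _
      calc |(Real.exp (-(u / 2)) - Real.exp (-(v / 2))) / sZ +
            Real.exp (-(v / 2)) * (1 / sZ - 1 / sZ')|
          ≤ |(Real.exp (-(u / 2)) - Real.exp (-(v / 2))) / sZ| +
            |Real.exp (-(v / 2)) * (1 / sZ - 1 / sZ')| := abs_add_le _ _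
        _ ≤ (L * d / 2) * Real.exp (M / 2) + (L * d / 2) * Real.exp (M / 2) * Real.exp M := by
            linarith
        _ ≤ B := by
            rw [hBdef]
            nlinarith [mul_le_mul_of_nonneg_left hexp_le
              (by positivity : (0:ℝ) ≤ L * d / 2), hexp_mul]
    calc (Real.exp (-(u / 2)) / sZ - Real.exp (-(v / 2)) / sZ') ^ 2
        = |Real.exp (-(u / 2)) / sZ - Real.exp (-(v / 2)) / sZ'| ^ 2 := (sq_abs _).symm
      _ ≤ B ^ 2 := by
          nlinarith [abs_nonneg (Real.exp (-(u / 2)) / sZ - Real.exp (-(v / 2)) / sZ')]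
  -- integrate the pointwise bound
  have hFmeas : Measurable fun r => (Real.sqrt (Real.exp (-Φ r δ) / Z) -
      Real.sqrt (Real.exp (-Φ r δ') / Z')) ^ 2 := by
    apply Measurable.pow_const
    exact (((hmeas δ).neg.exp.div_const Z).sqrt.sub ((hmeas δ').neg.exp.div_const Z').sqrt)
  have hFint : Integrable (fun r => (Real.sqrt (Real.exp (-Φ r δ) / Z) -
      Real.sqrt (Real.exp (-Φ r δ') / Z')) ^ 2) μ₀ := by
    refine (integrable_const (B ^ 2)).mono' hFmeas.aestronglyMeasurable ?_
    filter_upwards with r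
    rw [Real.norm_eq_abs, abs_of_nonneg (sq_nonneg _)]
    exact hpt r
  have hI : (∫ r, (Real.sqrt (Real.exp (-Φ r δ) / Z) -
      Real.sqrt (Real.exp (-Φ r δ') / Z')) ^ 2 ∂μ₀) ≤ B ^ 2 := by
    calc (∫ r, (Real.sqrt (Real.exp (-Φ r δ) / Z) -
          Real.sqrt (Real.exp (-Φ r δ') / Z')) ^ 2 ∂μ₀) ≤ ∫ _r, B ^ 2 ∂μ₀ :=
        integral_mono hFint (integrable_const _) hpt
      _ = B ^ 2 := by simp
  have hInonneg : 0 ≤ ∫ r, (Real.sqrt (Real.exp (-Φ r δ) / Z) -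
      Real.sqrt (Real.exp (-Φ r δ') / Z')) ^ 2 ∂μ₀ :=
    integral_nonneg fun r => sq_nonneg _
  calc Real.sqrt ((1 / 2) * ∫ r, (Real.sqrt (Real.exp (-Φ r δ) / Z) -
        Real.sqrt (Real.exp (-Φ r δ') / Z')) ^ 2 ∂μ₀)
      ≤ Real.sqrt (B ^ 2) := Real.sqrt_le_sqrt (by linarith)
    _ = B := Real.sqrt_sq hB0
    _ = 1 * L * Real.exp ((3 / 2) * M) * d := by rw [hBdef]; ring
end

section
/- Let μ₀ be a probability measure on X, let Φ(r,δ) = ½|Σ^{-1/2}(δ − 𝒢(r))|² with 𝒢 : X → ℝ^K bounded measurable with |𝒢(r)| ≤ B, and λ_min > 0 the least eigenvalue of the SPD matrix Σ. Set C_γ = λ_min^{-1}(γ + B). Then for all data δ, δ' with |δ|, |δ'| ≤ γ, the (normalized) posteriors μ^δ, μ^{δ'} defined by dμ^δ/dμ₀ ∝ e^{−Φ(·,δ)} satisfy d_Hell(μ^δ, μ^{δ'}) ≤ C̃ · C_γ · exp((3/4) C_γ²) · |δ − δ'| for an absolute constant C̃ > 0. -/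
open MeasureTheory Matrix

section helpers
variable {K : ℕ}

private lemma dd_nonneg (v : Fin K → ℝ) : 0 ≤ v ⬝ᵥ v :=
  Finset.sum_nonneg fun i _ => mul_self_nonneg _

private lemma dd_cs (v w : Fin K → ℝ) :
    v ⬝ᵥ w ≤ Real.sqrt (v ⬝ᵥ v) * Real.sqrt (w ⬝ᵥ w) := by
  have h := Finset.sum_mul_sq_le_sq_mul_sq Finset.univ v w
  have h2 : (v ⬝ᵥ w) ^ 2 ≤ (v ⬝ᵥ v) * (w ⬝ᵥ w) := by
    simpa [dotProduct, pow_two] using h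
  calc v ⬝ᵥ w ≤ |v ⬝ᵥ w| := le_abs_self _
    _ = Real.sqrt ((v ⬝ᵥ w) ^ 2) := (Real.sqrt_sq_eq_abs _).symm
    _ ≤ Real.sqrt ((v ⬝ᵥ v) * (w ⬝ᵥ w)) := Real.sqrt_le_sqrt h2
    _ = _ := Real.sqrt_mul (dd_nonneg v) _

private lemma dd_tri (v w : Fin K → ℝ) :
    Real.sqrt ((v + w) ⬝ᵥ (v + w)) ≤ Real.sqrt (v ⬝ᵥ v) + Real.sqrt (w ⬝ᵥ w) := by
  have hle : (v + w) ⬝ᵥ (v + w) ≤ (Real.sqrt (v ⬝ᵥ v) + Real.sqrt (w ⬝ᵥ w)) ^ 2 := by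
    have hexp : (v + w) ⬝ᵥ (v + w) = v ⬝ᵥ v + 2 * (v ⬝ᵥ w) + w ⬝ᵥ w := by
      simp [add_dotProduct, dotProduct_add, dotProduct_comm w v]; ring
    rw [hexp, add_sq]
    have h1 := Real.sq_sqrt (dd_nonneg v)
    have h2 := Real.sq_sqrt (dd_nonneg w)
    nlinarith [dd_cs v w]
  calc Real.sqrt ((v + w) ⬝ᵥ (v + w))
      ≤ Real.sqrt ((Real.sqrt (v ⬝ᵥ v) + Real.sqrt (w ⬝ᵥ w)) ^ 2) := Real.sqrt_le_sqrt hle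
    _ = _ := Real.sqrt_sq (by positivity)

private lemma form_nonneg {Sig : Matrix (Fin K) (Fin K) ℝ} (hpd : Sig.PosDef)
    (v : Fin K → ℝ) : 0 ≤ (Sig⁻¹ *ᵥ v) ⬝ᵥ v := by
  have h := hpd.inv.posSemidef.dotProduct_mulVec_nonneg v
  simpa [dotProduct_comm] using h

private lemma form_symm {Sig : Matrix (Fin K) (Fin K) ℝ} (hpd : Sig.PosDef)
    (v w : Fin K → ℝ) : (Sig⁻¹ *ᵥ v) ⬝ᵥ w = (Sig⁻¹ *ᵥ w) ⬝ᵥ v := by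
  have hsymm : (Sig⁻¹)ᵀ = Sig⁻¹ := by
    have h := hpd.inv.isHermitian
    simpa [Matrix.IsHermitian, Matrix.conjTranspose_eq_transpose_of_trivial] using h
  calc (Sig⁻¹ *ᵥ v) ⬝ᵥ w = w ⬝ᵥ (Sig⁻¹ *ᵥ v) := dotProduct_comm _ _
    _ = (w ᵥ* Sig⁻¹) ⬝ᵥ v := dotProduct_mulVec _ _ _
    _ = (Sig⁻¹ *ᵥ w) ⬝ᵥ v := by rw [← hsymm, vecMul_transpose, hsymm]

private lemma form_bound {Sig : Matrix (Fin K) (Fin K) ℝ} (hpd : Sig.PosDef)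
    {lmin : ℝ} (hl : 0 < lmin)
    (hlow : ∀ v : Fin K → ℝ, lmin * (v ⬝ᵥ v) ≤ (Sig *ᵥ v) ⬝ᵥ v)
    (v w : Fin K → ℝ) :
    (Sig⁻¹ *ᵥ v) ⬝ᵥ w ≤ lmin⁻¹ * (Real.sqrt (v ⬝ᵥ v) * Real.sqrt (w ⬝ᵥ w)) := by
  set u := Sig⁻¹ *ᵥ v with hu
  have hSu : Sig *ᵥ u = v := by
    rw [hu, mulVec_mulVec, Matrix.mul_nonsing_inv _ hpd.det_pos.ne'.isUnit, one_mulVec]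
  have h1 : lmin * (u ⬝ᵥ u) ≤ v ⬝ᵥ u := by
    have := hlow u
    rwa [hSu] at this
  have hu2 : Real.sqrt (u ⬝ᵥ u) ≤ lmin⁻¹ * Real.sqrt (v ⬝ᵥ v) := by
    rcases (dd_nonneg u).eq_or_lt with h0 | h0
    · rw [← h0, Real.sqrt_zero]
      positivity
    · have hsu : 0 < Real.sqrt (u ⬝ᵥ u) := Real.sqrt_pos.2 h0
      have hsq : Real.sqrt (u ⬝ᵥ u) ^ 2 = u ⬝ᵥ u := Real.sq_sqrt (dd_nonneg u)
      have hcs := dd_cs v u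
      have key : lmin * Real.sqrt (u ⬝ᵥ u) ≤ Real.sqrt (v ⬝ᵥ v) := by nlinarith
      rw [le_inv_mul_iff₀ hl]
      exact key
  calc u ⬝ᵥ w ≤ Real.sqrt (u ⬝ᵥ u) * Real.sqrt (w ⬝ᵥ w) := dd_cs u w
    _ ≤ (lmin⁻¹ * Real.sqrt (v ⬝ᵥ v)) * Real.sqrt (w ⬝ᵥ w) :=
        mul_le_mul_of_nonneg_right hu2 (Real.sqrt_nonneg _)
    _ = _ := by ring
end helpers


private lemma hellinger_core {X : Type*} [MeasurableSpace X] (μ₀ : Measure X)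
    [IsProbabilityMeasure μ₀] (φ ψ : X → ℝ) (hφm : Measurable φ) (hψm : Measurable ψ)
    {M ε : ℝ} (hε : 0 ≤ ε)
    (hφ0 : ∀ r, 0 ≤ φ r) (hψ0 : ∀ r, 0 ≤ ψ r)
    (hφM : ∀ r, φ r ≤ M) (hψM : ∀ r, ψ r ≤ M)
    (hlip : ∀ r, |φ r - ψ r| ≤ ε) :
    Real.sqrt ((1/2) * ∫ r, (Real.sqrt (Real.exp (-φ r) / ∫ s, Real.exp (-φ s) ∂μ₀)
        - Real.sqrt (Real.exp (-ψ r) / ∫ s, Real.exp (-ψ s) ∂μ₀)) ^ 2 ∂μ₀)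
      ≤ 3 * ε := by
  set Zφ := ∫ s, Real.exp (-φ s) ∂μ₀ with hZφdef
  set Zψ := ∫ s, Real.exp (-ψ s) ∂μ₀ with hZψdef
  -- integrability
  have hint : ∀ (χ : X → ℝ), Measurable χ → (∀ r, 0 ≤ χ r) →
      Integrable (fun r => Real.exp (-χ r)) μ₀ := by
    intro χ hm h0
    refine Integrable.mono' (integrable_const 1) (hm.neg.exp.aestronglyMeasurable) ?_
    filter_upwards with r
    rw [Real.norm_eq_abs, abs_of_pos (Real.exp_pos _)]
    calc Real.exp (-χ r) ≤ Real.exp 0 := Real.exp_le_exp.2 (by linarith [h0 r])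
      _ = 1 := Real.exp_zero
  have hfφ := hint φ hφm hφ0
  have hfψ := hint ψ hψm hψ0
  -- lower bounds on Z
  have hZlb : ∀ (χ : X → ℝ), Measurable χ → (∀ r, 0 ≤ χ r) → (∀ r, χ r ≤ M) →
      Real.exp (-M) ≤ ∫ s, Real.exp (-χ s) ∂μ₀ := by
    intro χ hm h0 hMb
    calc Real.exp (-M) = ∫ _, Real.exp (-M) ∂μ₀ := by simp
      _ ≤ ∫ s, Real.exp (-χ s) ∂μ₀ :=
        integral_mono (integrable_const _) (hint χ hm h0)
          (fun r => Real.exp_le_exp.2 (by linarith [hMb r]))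
  have hZφpos : 0 < Zφ := lt_of_lt_of_le (Real.exp_pos _) (hZlb φ hφm hφ0 hφM)
  have hZψpos : 0 < Zψ := lt_of_lt_of_le (Real.exp_pos _) (hZlb ψ hψm hψ0 hψM)
  -- Z comparisons
  have hcomp : ∀ (χ₁ χ₂ : X → ℝ), Measurable χ₁ → (∀ r, 0 ≤ χ₁ r) → Measurable χ₂ →
      (∀ r, 0 ≤ χ₂ r) → (∀ r, χ₂ r - χ₁ r ≤ ε) →
      (∫ s, Real.exp (-χ₁ s) ∂μ₀) ≤ Real.exp ε * ∫ s, Real.exp (-χ₂ s) ∂μ₀ := by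
    intro χ₁ χ₂ hm1 h01 hm2 h02 hle
    calc (∫ s, Real.exp (-χ₁ s) ∂μ₀) ≤ ∫ s, Real.exp ε * Real.exp (-χ₂ s) ∂μ₀ := by
          refine integral_mono (hint χ₁ hm1 h01) ((hint χ₂ hm2 h02).const_mul _) fun r => ?_
          rw [← Real.exp_add]
          exact Real.exp_le_exp.2 (by linarith [hle r])
      _ = Real.exp ε * ∫ s, Real.exp (-χ₂ s) ∂μ₀ := integral_const_mul _ _
  have hZφψ : Zφ ≤ Real.exp ε * Zψ :=
    hcomp φ ψ hφm hφ0 hψm hψ0 fun r => by have := (abs_le.1 (hlip r)).1; linarith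
  have hZψφ : Zψ ≤ Real.exp ε * Zφ :=
    hcomp ψ φ hψm hψ0 hφm hφ0 fun r => by have := (abs_le.1 (hlip r)).2; linarith
  -- normalized integrals are 1
  have hint_p : ∫ r, Real.exp (-φ r) / Zφ ∂μ₀ = 1 := by
    rw [integral_div, div_self hZφpos.ne']
  have hint_q : ∫ r, Real.exp (-ψ r) / Zψ ∂μ₀ = 1 := by
    rw [integral_div, div_self hZψpos.ne']
  have he1 : (1:ℝ) ≤ Real.exp ε := Real.one_le_exp hε
  -- key bound on the integral
  have hkey : (1/2) * (∫ r, (Real.sqrt (Real.exp (-φ r) / Zφ)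
      - Real.sqrt (Real.exp (-ψ r) / Zψ)) ^ 2 ∂μ₀) ≤ (3 * ε)^2 := by
    by_cases hε1 : ε ≤ 1
    · -- small ε : pointwise multiplicative closeness
      have hpoint : ∀ r, (Real.sqrt (Real.exp (-φ r) / Zφ)
          - Real.sqrt (Real.exp (-ψ r) / Zψ)) ^ 2
          ≤ (Real.exp ε - 1)^2 * (Real.exp (-φ r) / Zφ) := by
        intro r
        set p := Real.exp (-φ r) / Zφ with hp
        set q := Real.exp (-ψ r) / Zψ with hq
        have hp0 : 0 ≤ p := by positivity
        have hq0 : 0 ≤ q := by positivity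
        have hφψ : Real.exp (-ψ r) ≤ Real.exp ε * Real.exp (-φ r) := by
          rw [← Real.exp_add]
          exact Real.exp_le_exp.2 (by linarith [(abs_le.1 (hlip r)).2])
        have hψφ : Real.exp (-φ r) ≤ Real.exp ε * Real.exp (-ψ r) := by
          rw [← Real.exp_add]
          exact Real.exp_le_exp.2 (by linarith [(abs_le.1 (hlip r)).1])
        have hqp : q ≤ (Real.exp ε)^2 * p := by
          rw [hq, hp, div_le_iff₀ hZψpos, ← mul_div_assoc, div_mul_eq_mul_div,
            le_div_iff₀ hZφpos]
          have h := mul_le_mul hφψ hZφψ hZφpos.le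
            (by positivity : (0:ℝ) ≤ Real.exp ε * Real.exp (-φ r))
          nlinarith [h]
        have hpq : p ≤ (Real.exp ε)^2 * q := by
          rw [hp, hq, div_le_iff₀ hZφpos, ← mul_div_assoc, div_mul_eq_mul_div,
            le_div_iff₀ hZψpos]
          have h := mul_le_mul hψφ hZψφ hZψpos.le
            (by positivity : (0:ℝ) ≤ Real.exp ε * Real.exp (-ψ r))
          nlinarith [h]
        have hsqrt_mul : ∀ x : ℝ, 0 ≤ x → Real.sqrt ((Real.exp ε)^2 * x)
            = Real.exp ε * Real.sqrt x := by
          intro x hx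
          rw [Real.sqrt_mul (by positivity), Real.sqrt_sq (Real.exp_pos ε).le]
        have hsq : Real.sqrt q ≤ Real.exp ε * Real.sqrt p :=
          (Real.sqrt_le_sqrt hqp).trans_eq (hsqrt_mul p hp0)
        have hsp : Real.sqrt p ≤ Real.exp ε * Real.sqrt q :=
          (Real.sqrt_le_sqrt hpq).trans_eq (hsqrt_mul q hq0)
        have habs : |Real.sqrt p - Real.sqrt q| ≤ (Real.exp ε - 1) * Real.sqrt p := by
          rw [abs_le]
          constructor
          · nlinarith [Real.sqrt_nonneg p, Real.sqrt_nonneg q]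
          · nlinarith [Real.sqrt_nonneg p, Real.sqrt_nonneg q, Real.exp_pos ε,
              mul_nonneg (sq_nonneg (Real.exp ε - 1)) (Real.sqrt_nonneg p)]
        calc (Real.sqrt p - Real.sqrt q)^2 = |Real.sqrt p - Real.sqrt q|^2 := (sq_abs _).symm
          _ ≤ ((Real.exp ε - 1) * Real.sqrt p)^2 := by
              have h0 : 0 ≤ (Real.exp ε - 1) * Real.sqrt p := by
                apply mul_nonneg (by linarith) (Real.sqrt_nonneg _)
              exact pow_le_pow_left₀ (abs_nonneg _) habs 2
          _ = (Real.exp ε - 1)^2 * p := by rw [mul_pow, Real.sq_sqrt hp0]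
      have hI : (∫ r, (Real.sqrt (Real.exp (-φ r) / Zφ)
          - Real.sqrt (Real.exp (-ψ r) / Zψ)) ^ 2 ∂μ₀) ≤ (Real.exp ε - 1)^2 := by
        calc (∫ r, (Real.sqrt (Real.exp (-φ r) / Zφ)
            - Real.sqrt (Real.exp (-ψ r) / Zψ)) ^ 2 ∂μ₀)
            ≤ ∫ r, (Real.exp ε - 1)^2 * (Real.exp (-φ r) / Zφ) ∂μ₀ :=
              integral_mono_of_nonneg (Filter.Eventually.of_forall fun r => sq_nonneg _)
                ((hfφ.div_const _).const_mul _) (Filter.Eventually.of_forall hpoint)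
          _ = (Real.exp ε - 1)^2 * ∫ r, Real.exp (-φ r) / Zφ ∂μ₀ := integral_const_mul _ _
          _ = (Real.exp ε - 1)^2 := by rw [hint_p, mul_one]
      have hεe : Real.exp ε - 1 ≤ 3 * ε := by
        have h1 : Real.exp ε ≤ Real.exp 1 := Real.exp_le_exp.2 hε1
        have h3 : Real.exp ε * (1 - ε) ≤ 1 := by
          have h2 := Real.add_one_le_exp (-ε)
          calc Real.exp ε * (1 - ε) ≤ Real.exp ε * Real.exp (-ε) :=
                mul_le_mul_of_nonneg_left (by linarith) (Real.exp_pos _).le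
            _ = 1 := by rw [← Real.exp_add]; simp
        have he3 : Real.exp 1 ≤ 3 := by linarith [Real.exp_one_lt_d9]
        nlinarith [Real.exp_pos ε]
      nlinarith [hI, hεe, he1, hε]
    · -- large ε : trivial bound
      push_neg at hε1
      have hpoint : ∀ r, (Real.sqrt (Real.exp (-φ r) / Zφ)
          - Real.sqrt (Real.exp (-ψ r) / Zψ)) ^ 2
          ≤ 2 * (Real.exp (-φ r) / Zφ) + 2 * (Real.exp (-ψ r) / Zψ) := by
        intro r
        have hp0 : 0 ≤ Real.exp (-φ r) / Zφ := by positivity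
        have hq0 : 0 ≤ Real.exp (-ψ r) / Zψ := by positivity
        nlinarith [Real.sq_sqrt hp0, Real.sq_sqrt hq0,
          sq_nonneg (Real.sqrt (Real.exp (-φ r) / Zφ) + Real.sqrt (Real.exp (-ψ r) / Zψ))]
      have hI : (∫ r, (Real.sqrt (Real.exp (-φ r) / Zφ)
          - Real.sqrt (Real.exp (-ψ r) / Zψ)) ^ 2 ∂μ₀) ≤ 4 := by
        have hdom : Integrable (fun r => 2 * (Real.exp (-φ r) / Zφ)
            + 2 * (Real.exp (-ψ r) / Zψ)) μ₀ :=
          ((hfφ.div_const _).const_mul 2).add ((hfψ.div_const _).const_mul 2)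
        calc (∫ r, (Real.sqrt (Real.exp (-φ r) / Zφ)
            - Real.sqrt (Real.exp (-ψ r) / Zψ)) ^ 2 ∂μ₀)
            ≤ ∫ r, 2 * (Real.exp (-φ r) / Zφ) + 2 * (Real.exp (-ψ r) / Zψ) ∂μ₀ :=
              integral_mono_of_nonneg (Filter.Eventually.of_forall fun r => sq_nonneg _)
                hdom (Filter.Eventually.of_forall hpoint)
          _ = (∫ r, 2 * (Real.exp (-φ r) / Zφ) ∂μ₀)
              + ∫ r, 2 * (Real.exp (-ψ r) / Zψ) ∂μ₀ :=
              integral_add ((hfφ.div_const _).const_mul 2) ((hfψ.div_const _).const_mul 2)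
          _ = 2 * (∫ r, Real.exp (-φ r) / Zφ ∂μ₀) + 2 * ∫ r, Real.exp (-ψ r) / Zψ ∂μ₀ := by
              rw [integral_const_mul, integral_const_mul]
          _ = 4 := by rw [hint_p, hint_q]; norm_num
      nlinarith [hI]
  calc Real.sqrt ((1/2) * ∫ r, (Real.sqrt (Real.exp (-φ r) / Zφ)
        - Real.sqrt (Real.exp (-ψ r) / Zψ)) ^ 2 ∂μ₀)
      ≤ Real.sqrt ((3 * ε)^2) := Real.sqrt_le_sqrt hkey
    _ = 3 * ε := Real.sqrt_sq (by positivity)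


/-- Hellinger stability for the Gaussian posterior: with
`Φ(r,δ) = ½|Σ^{-1/2}(δ−𝒢(r))|²` (written via the quadratic form of `Σ⁻¹`),
`|𝒢| ≤ B`, and `C_γ = λ_min^{-1}(γ+B)`, the posteriors satisfy
`d_Hell(μ^δ, μ^{δ'}) ≤ C̃ C_γ exp((3/4)C_γ²)|δ−δ'|` for an absolute `C̃ > 0`. -/
theorem gaussian_posterior_hellinger_stability
    {X : Type*} [MeasurableSpace X] (μ₀ : Measure X) [IsProbabilityMeasure μ₀]
    (K : ℕ) (Sig : Matrix (Fin K) (Fin K) ℝ) (hpd : Sig.PosDef) :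
    ∃ C : ℝ, 0 < C ∧
      ∀ (𝒢 : X → (Fin K → ℝ)), Measurable 𝒢 →
      ∀ (B lmin γ : ℝ), 0 < lmin →
        (∀ v : Fin K → ℝ, lmin * (v ⬝ᵥ v) ≤ (Sig *ᵥ v) ⬝ᵥ v) →
        (∀ r, Real.sqrt (𝒢 r ⬝ᵥ 𝒢 r) ≤ B) →
        ∀ δ δ' : Fin K → ℝ, Real.sqrt (δ ⬝ᵥ δ) ≤ γ → Real.sqrt (δ' ⬝ᵥ δ') ≤ γ →
          (let Φ : X → (Fin K → ℝ) → ℝ :=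
            fun r e => (1 / 2) * ((Sig⁻¹ *ᵥ (e - 𝒢 r)) ⬝ᵥ (e - 𝒢 r));
          let Cγ : ℝ := lmin⁻¹ * (γ + B);
          Real.sqrt ((1 / 2) * ∫ r,
              (Real.sqrt (Real.exp (-Φ r δ) / ∫ s, Real.exp (-Φ s δ) ∂μ₀) -
                Real.sqrt (Real.exp (-Φ r δ') / ∫ s, Real.exp (-Φ s δ') ∂μ₀)) ^ 2 ∂μ₀)
            ≤ C * Cγ * Real.exp ((3 / 4) * Cγ ^ 2) *
              Real.sqrt ((δ - δ') ⬝ᵥ (δ - δ'))) := by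
  refine ⟨3, by norm_num, ?_⟩
  intro 𝒢 h𝒢 B lmin γ hl hlow hB δ δ' hδ hδ'
  intro Φ Cγ
  have hX : Nonempty X := by
    by_contra h
    rw [not_nonempty_iff] at h
    have h1 : μ₀ Set.univ = 1 := measure_univ
    rw [Set.univ_eq_empty_iff.mpr h, measure_empty] at h1
    exact zero_ne_one h1
  have hγ0 : 0 ≤ γ := (Real.sqrt_nonneg _).trans hδ
  have hB0 : 0 ≤ B := (Real.sqrt_nonneg _).trans (hB hX.some)
  have hCγ0 : 0 ≤ Cγ := by
    simp only [Cγ]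
    positivity
  -- vector norm bound
  have hGB : ∀ (r : X) (e : Fin K → ℝ), Real.sqrt (e ⬝ᵥ e) ≤ γ →
      Real.sqrt ((e - 𝒢 r) ⬝ᵥ (e - 𝒢 r)) ≤ γ + B := by
    intro r e he
    rw [sub_eq_add_neg]
    refine (dd_tri e (-(𝒢 r))).trans ?_
    have hneg : (-(𝒢 r)) ⬝ᵥ (-(𝒢 r)) = 𝒢 r ⬝ᵥ 𝒢 r := by
      rw [neg_dotProduct, dotProduct_neg, neg_neg]
    rw [hneg]
    exact add_le_add he (hB r)
  set M : ℝ := (1/2) * (lmin⁻¹ * ((γ + B) * (γ + B))) with hM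
  have hΦnn : ∀ (r : X) (e : Fin K → ℝ), 0 ≤ Φ r e := by
    intro r e
    simp only [Φ]
    have := form_nonneg hpd (e - 𝒢 r)
    linarith
  have hΦM : ∀ (r : X) (e : Fin K → ℝ), Real.sqrt (e ⬝ᵥ e) ≤ γ → Φ r e ≤ M := by
    intro r e he
    have hb := form_bound hpd hl hlow (e - 𝒢 r) (e - 𝒢 r)
    have hn := hGB r e he
    have hs : Real.sqrt ((e - 𝒢 r) ⬝ᵥ (e - 𝒢 r)) * Real.sqrt ((e - 𝒢 r) ⬝ᵥ (e - 𝒢 r))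
        ≤ (γ + B) * (γ + B) := mul_le_mul hn hn (Real.sqrt_nonneg _) (by linarith)
    have hli : lmin⁻¹ * (Real.sqrt ((e - 𝒢 r) ⬝ᵥ (e - 𝒢 r)) *
        Real.sqrt ((e - 𝒢 r) ⬝ᵥ (e - 𝒢 r))) ≤ lmin⁻¹ * ((γ + B) * (γ + B)) :=
      mul_le_mul_of_nonneg_left hs (by positivity)
    simp only [Φ, hM]
    linarith
  set ε : ℝ := Cγ * Real.sqrt ((δ - δ') ⬝ᵥ (δ - δ')) with hε
  have hε0 : 0 ≤ ε := mul_nonneg hCγ0 (Real.sqrt_nonneg _)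
  -- Lipschitz estimate
  have hLip : ∀ r : X, |Φ r δ - Φ r δ'| ≤ ε := by
    intro r
    set x : Fin K → ℝ := δ - 𝒢 r with hx
    set y : Fin K → ℝ := δ' - 𝒢 r with hy
    have hxy : x - y = δ - δ' := by
      rw [hx, hy]
      abel
    have hid : (Sig⁻¹ *ᵥ (x + y)) ⬝ᵥ (x - y)
        = (Sig⁻¹ *ᵥ x) ⬝ᵥ x - (Sig⁻¹ *ᵥ y) ⬝ᵥ y := by
      have hs : (Sig⁻¹ *ᵥ x) ⬝ᵥ y = (Sig⁻¹ *ᵥ y) ⬝ᵥ x := form_symm hpd x y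
      simp only [mulVec_add, add_dotProduct, dotProduct_sub]
      linarith [hs]
    have heq : Φ r δ - Φ r δ' = (1/2) * ((Sig⁻¹ *ᵥ (x + y)) ⬝ᵥ (δ - δ')) := by
      simp only [Φ]
      rw [← hxy, hid]
      ring
    have hw : Real.sqrt ((x + y) ⬝ᵥ (x + y)) ≤ (γ + B) + (γ + B) :=
      (dd_tri x y).trans (add_le_add (hGB r δ hδ) (hGB r δ' hδ'))
    have hub : ∀ z : Fin K → ℝ, Real.sqrt (z ⬝ᵥ z) ≤ (γ + B) + (γ + B) →
        (Sig⁻¹ *ᵥ z) ⬝ᵥ (δ - δ') ≤ 2 * ε := by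
      intro z hz
      refine (form_bound hpd hl hlow z (δ - δ')).trans ?_
      have h1 : Real.sqrt (z ⬝ᵥ z) * Real.sqrt ((δ - δ') ⬝ᵥ (δ - δ'))
          ≤ ((γ + B) + (γ + B)) * Real.sqrt ((δ - δ') ⬝ᵥ (δ - δ')) :=
        mul_le_mul_of_nonneg_right hz (Real.sqrt_nonneg _)
      have h2 := mul_le_mul_of_nonneg_left h1 (by positivity : (0:ℝ) ≤ lmin⁻¹)
      refine h2.trans_eq ?_
      rw [hε]
      simp only [Cγ]
      ring
    have hu1 : (Sig⁻¹ *ᵥ (x + y)) ⬝ᵥ (δ - δ') ≤ 2 * ε := hub (x + y) hw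
    have hu2 : -((Sig⁻¹ *ᵥ (x + y)) ⬝ᵥ (δ - δ')) ≤ 2 * ε := by
      have h3 : (Sig⁻¹ *ᵥ (-(x + y))) ⬝ᵥ (δ - δ') ≤ 2 * ε := by
        refine hub (-(x + y)) ?_
        rw [neg_dotProduct, dotProduct_neg, neg_neg]
        exact hw
      rwa [mulVec_neg, neg_dotProduct] at h3
    rw [heq, abs_le]
    constructor <;> [linarith; linarith]
  -- apply the core lemma
  have hmeas : ∀ e : Fin K → ℝ, Measurable fun r => Φ r e := by
    intro e
    simp only [Φ]
    apply Measurable.const_mul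
    simp only [dotProduct, mulVec, dotProduct]
    refine Finset.measurable_sum _ fun i _ => Measurable.mul ?_ ?_
    · refine Finset.measurable_sum _ fun j _ => ?_
      have : Measurable fun r => 𝒢 r j := (measurable_pi_apply j).comp h𝒢
      simp only [Pi.sub_apply]
      exact (measurable_const.sub this).const_mul _
    · have : Measurable fun r => 𝒢 r i := (measurable_pi_apply i).comp h𝒢
      simp only [Pi.sub_apply]
      exact measurable_const.sub this
  have hcore := hellinger_core μ₀ (fun r => Φ r δ) (fun r => Φ r δ')
    (hmeas δ) (hmeas δ') hε0 (fun r => hΦnn r δ) (fun r => hΦnn r δ')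
    (fun r => hΦM r δ hδ) (fun r => hΦM r δ' hδ') hLip
  refine hcore.trans ?_
  rw [hε]
  have hexp1 : (1:ℝ) ≤ Real.exp ((3/4) * Cγ^2) := Real.one_le_exp (by positivity)
  have hs0 : 0 ≤ Real.sqrt ((δ - δ') ⬝ᵥ (δ - δ')) := Real.sqrt_nonneg _
  nlinarith [mul_nonneg hCγ0 hs0, mul_le_mul_of_nonneg_left hexp1 (mul_nonneg hCγ0 hs0)]
end
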